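/- There exists a constant C_S > 0 with the following property. For every r > 0, every continuously differentiable function v : ℝ² → ℝ, and every continuously differentiable function φ : ℝ² → ℝ whose support is compact and contained in the open ball B(0,2r), with 0 ≤ φ ≤ 1 and |∇φ(x)| ≤ 2/r for all x, one has ( ∫_{ℝ²} v⁴ φ⁴ dx )^{1/2} ≤ 2 C_S ( ( ∫_{ℝ²} v² φ² dx )^{1/2} ( ∫_{ℝ²} |∇v|² φ² dx )^{1/2} + (2/r) ∫_{B(0,2r)} v² dx ). -/

import Mathlib

open MeasureTheory Real

set_option maxHeartbeats 1000000 in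
/-- Local Gagliardo–Nirenberg step of the Moser iteration on `ℝ²`. -/
theorem stmt_8 :
    ∃ CS : ℝ, 0 < CS ∧
      ∀ r : ℝ, 0 < r →
      ∀ v φ : EuclideanSpace ℝ (Fin 2) → ℝ,
        ContDiff ℝ 1 v → ContDiff ℝ 1 φ →
        HasCompactSupport φ →
        tsupport φ ⊆ Metric.ball (0 : EuclideanSpace ℝ (Fin 2)) (2 * r) →
        (∀ x, 0 ≤ φ x) → (∀ x, φ x ≤ 1) →
        (∀ x, ‖gradient φ x‖ ≤ 2 / r) →
        (∫ x, v x ^ 4 * φ x ^ 4) ^ (1 / 2 : ℝ) ≤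
          2 * CS * ((∫ x, v x ^ 2 * φ x ^ 2) ^ (1 / 2 : ℝ) *
              (∫ x, ‖gradient v x‖ ^ 2 * φ x ^ 2) ^ (1 / 2 : ℝ) +
            (2 / r) * ∫ x in Metric.ball (0 : EuclideanSpace ℝ (Fin 2)) (2 * r), v x ^ 2) := by
  classical
  set C : NNReal :=
    lintegralPowLePowLIntegralFDerivConst (volume : Measure (EuclideanSpace ℝ (Fin 2))) 2 with hCdef
  refine ⟨Real.sqrt C + 1, by positivity, ?_⟩
  intro r hr v φ hv hφ hφc hφsupp hφ0 hφ1 hφgrad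
  set B : Set (EuclideanSpace ℝ (Fin 2)) := Metric.ball 0 (2 * r) with hBdef
  have hgradnorm : ∀ (f : EuclideanSpace ℝ (Fin 2) → ℝ) x, ‖gradient f x‖ = ‖fderiv ℝ f x‖ := by
    intro f x; simp [gradient]
  have hgradφ : ∀ x, ‖fderiv ℝ φ x‖ ≤ 2 / r := fun x => (hgradnorm φ x) ▸ hφgrad x
  set u : EuclideanSpace ℝ (Fin 2) → ℝ := fun x => v x ^ 2 * φ x ^ 2 with hu_def
  have hu : ContDiff ℝ 1 u := (hv.pow 2).mul (hφ.pow 2)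
  have h2u : HasCompactSupport u := by
    apply HasCompactSupport.intro (hφc.isCompact)
    intro x hx
    have : φ x = 0 := image_eq_zero_of_notMem_tsupport hx
    simp [u, this]
  -- continuity facts
  have hvc : Continuous v := hv.continuous
  have hφcont : Continuous φ := hφ.continuous
  have hDv : Continuous (fderiv ℝ v) := hv.continuous_fderiv one_ne_zero
  have hDφ : Continuous (fderiv ℝ φ) := hφ.continuous_fderiv one_ne_zero
  -- derivative formula
  have hfd : ∀ x, fderiv ℝ u x
      = (2 * v x * φ x ^ 2) • fderiv ℝ v x + (2 * φ x * v x ^ 2) • fderiv ℝ φ x := by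
    intro x
    have hv' := (hv.differentiable one_ne_zero x).hasFDerivAt
    have hφ' := (hφ.differentiable one_ne_zero x).hasFDerivAt
    have h := (hv'.mul hv').mul (hφ'.mul hφ')
    have he : u = fun x => (v x * v x) * (φ x * φ x) := by
      funext y; simp only [u]; ring
    rw [he]
    have h2 : HasFDerivAt (fun x => (v x * v x) * (φ x * φ x))
        ((2 * v x * φ x ^ 2) • fderiv ℝ v x + (2 * φ x * v x ^ 2) • fderiv ℝ φ x) x := by
      refine h.congr_fderiv ?_; simp only [Pi.mul_apply]; module
    exact h2.fderiv
  -- bound function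
  set f1 : EuclideanSpace ℝ (Fin 2) → ℝ :=
    fun x => (|v x| * φ x) * (‖fderiv ℝ v x‖ * φ x) with hf1def
  set f2 : EuclideanSpace ℝ (Fin 2) → ℝ := B.indicator (fun x => v x ^ 2) with hf2def
  have hf1nn : ∀ x, 0 ≤ f1 x := by
    intro x
    have := hφ0 x
    positivity
  have hf1c : Continuous f1 := by
    apply Continuous.mul <;> exact Continuous.mul (by fun_prop) hφcont
  have hf1supp : HasCompactSupport f1 := by
    apply HasCompactSupport.intro (hφc.isCompact)
    intro x hx
    have : φ x = 0 := image_eq_zero_of_notMem_tsupport hx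
    simp [f1, this]
  have hf1int : Integrable f1 := hf1c.integrable_of_hasCompactSupport hf1supp
  have hv2intB : IntegrableOn (fun x => v x ^ 2) B := by
    have : IntegrableOn (fun x => v x ^ 2) (Metric.closedBall (0 : EuclideanSpace ℝ (Fin 2)) (2 * r)) :=
      ((hvc.pow 2).continuousOn).integrableOn_compact (isCompact_closedBall _ _)
    exact this.mono_set Metric.ball_subset_closedBall
  have hf2int : Integrable f2 :=
    (integrable_indicator_iff measurableSet_ball).2 hv2intB
  have hf2nn : ∀ x, 0 ≤ f2 x := by
    intro x
    simp only [f2]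
    exact Set.indicator_nonneg (fun y _ => by positivity) x
  -- pointwise bound on ‖fderiv u‖
  have hptws : ∀ x, ‖fderiv ℝ u x‖ ≤ 2 * f1 x + (4 / r) * f2 x := by
    intro x
    rw [hfd x]
    refine le_trans (norm_add_le _ _) ?_
    have h1 : ‖(2 * v x * φ x ^ 2) • fderiv ℝ v x‖ = 2 * f1 x := by
      rw [norm_smul, Real.norm_eq_abs, abs_mul, abs_mul, abs_two, abs_pow,
        abs_of_nonneg (hφ0 x)]
      simp only [f1]; ring
    have h2 : ‖(2 * φ x * v x ^ 2) • fderiv ℝ φ x‖ ≤ (4 / r) * f2 x := by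
      by_cases hx : x ∈ B
      · have hind : f2 x = v x ^ 2 := by simp [f2, Set.indicator_of_mem hx]
        rw [hind, norm_smul, Real.norm_eq_abs, abs_mul, abs_mul, abs_two, abs_pow,
          abs_of_nonneg (hφ0 x)]
        have h2r : (0:ℝ) ≤ 2 / r := by positivity
        calc 2 * φ x * |v x| ^ 2 * ‖fderiv ℝ φ x‖
            ≤ 2 * 1 * |v x| ^ 2 * (2 / r) := by
              gcongr <;> first | positivity | exact hφ0 x | exact hφ1 x | exact hgradφ x
          _ = (4 / r) * v x ^ 2 := by rw [sq_abs]; ring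
      · have hxs : x ∉ tsupport φ := fun h => hx (hφsupp h)
        have hφx : fderiv ℝ φ x = 0 := by
          by_contra h
          exact hxs (support_fderiv_subset (𝕜 := ℝ) (Function.mem_support.2 h))
        have hind : f2 x = 0 := by simp [f2, Set.indicator_of_notMem hx]
        rw [hφx, hind, smul_zero, norm_zero, mul_zero]
    linarith [h1 ▸ le_refl ‖(2 * v x * φ x ^ 2) • fderiv ℝ v x‖, h2]
  -- integrability of the dominating function and of ‖fderiv u‖
  have hgint : Integrable (fun x => 2 * f1 x + (4 / r) * f2 x) :=
    (hf1int.const_mul 2).add (hf2int.const_mul (4 / r))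
  have hDuc : Continuous (fun x => ‖fderiv ℝ u x‖) := (hu.continuous_fderiv one_ne_zero).norm
  have hDusupp : HasCompactSupport (fun x => ‖fderiv ℝ u x‖) := (HasCompactSupport.fderiv (𝕜 := ℝ) h2u).norm
  have hDuint : Integrable (fun x => ‖fderiv ℝ u x‖) :=
    hDuc.integrable_of_hasCompactSupport hDusupp
  set D : ℝ := ∫ x, ‖fderiv ℝ u x‖ with hDdef
  have hDnn : 0 ≤ D := integral_nonneg fun x => norm_nonneg _
  have hJeq : ∫ x, f2 x = ∫ x in B, v x ^ 2 := integral_indicator measurableSet_ball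
  set J : ℝ := ∫ x in B, v x ^ 2 with hJdef
  have hJnn : 0 ≤ J := setIntegral_nonneg measurableSet_ball fun x _ => by positivity
  have hDle : D ≤ 2 * (∫ x, f1 x) + (4 / r) * J := by
    calc D ≤ ∫ x, (2 * f1 x + (4 / r) * f2 x) := integral_mono hDuint hgint hptws
      _ = 2 * (∫ x, f1 x) + (4 / r) * ∫ x, f2 x := by
          rw [integral_add (hf1int.const_mul 2) (hf2int.const_mul (4 / r)),
            integral_const_mul, integral_const_mul]
      _ = 2 * (∫ x, f1 x) + (4 / r) * J := by rw [hJeq]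
  -- Cauchy-Schwarz for the first term
  set A : ℝ := (∫ x, v x ^ 2 * φ x ^ 2) ^ (1 / 2 : ℝ) with hAdef
  set Bv : ℝ := (∫ x, ‖gradient v x‖ ^ 2 * φ x ^ 2) ^ (1 / 2 : ℝ) with hBvdef
  have hAnn : 0 ≤ A := Real.rpow_nonneg (integral_nonneg fun x => by positivity) _
  have hBvnn : 0 ≤ Bv :=
    Real.rpow_nonneg (integral_nonneg fun x => by positivity) _
  have hpq : Real.HolderConjugate 2 2 := by constructor <;> norm_num
  have hmem1 : MemLp (fun x => |v x| * φ x) (ENNReal.ofReal 2) volume := by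
    apply Continuous.memLp_of_hasCompactSupport (μ := volume) (by fun_prop)
    apply HasCompactSupport.intro hφc.isCompact
    intro x hx
    simp [image_eq_zero_of_notMem_tsupport hx]
  have hmem2 : MemLp (fun x => ‖fderiv ℝ v x‖ * φ x) (ENNReal.ofReal 2) volume := by
    apply Continuous.memLp_of_hasCompactSupport (μ := volume) (by fun_prop)
    apply HasCompactSupport.intro hφc.isCompact
    intro x hx
    simp [image_eq_zero_of_notMem_tsupport hx]
  have hHolder : (∫ x, f1 x) ≤ A * Bv := by
    have h := integral_mul_le_Lp_mul_Lq_of_nonneg hpq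
      (Filter.Eventually.of_forall fun x => mul_nonneg (abs_nonneg _) (hφ0 x) :
        0 ≤ᵐ[volume] fun x => |v x| * φ x)
      (Filter.Eventually.of_forall fun x => mul_nonneg (norm_nonneg _) (hφ0 x) :
        0 ≤ᵐ[volume] fun x => ‖fderiv ℝ v x‖ * φ x) hmem1 hmem2
    have e1 : (∫ x, (|v x| * φ x) ^ (2 : ℝ)) = ∫ x, v x ^ 2 * φ x ^ 2 := by
      apply integral_congr_ae
      filter_upwards with x
      rw [show (2 : ℝ) = ((2 : ℕ) : ℝ) by norm_num, Real.rpow_natCast, mul_pow, sq_abs]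
    have e2 : (∫ x, (‖fderiv ℝ v x‖ * φ x) ^ (2 : ℝ))
        = ∫ x, ‖gradient v x‖ ^ 2 * φ x ^ 2 := by
      apply integral_congr_ae
      filter_upwards with x
      rw [show (2 : ℝ) = ((2 : ℕ) : ℝ) by norm_num, Real.rpow_natCast, mul_pow, hgradnorm]
    rw [e1, e2] at h
    exact h
  -- Gagliardo-Nirenberg-Sobolev inequality
  have hpconj : Real.HolderConjugate (Module.finrank ℝ (EuclideanSpace ℝ (Fin 2))) 2 := by
    have : Module.finrank ℝ (EuclideanSpace ℝ (Fin 2)) = 2 := by simp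
    rw [this]
    constructor <;> norm_num
  have hGNS := lintegral_pow_le_pow_lintegral_fderiv
    (volume : Measure (EuclideanSpace ℝ (Fin 2))) hu h2u hpconj
  have hI4int : Integrable (fun x => v x ^ 4 * φ x ^ 4) := by
    apply Continuous.integrable_of_hasCompactSupport (by fun_prop)
    apply HasCompactSupport.intro hφc.isCompact
    intro x hx
    simp [image_eq_zero_of_notMem_tsupport hx]
  have hI4nn : (0 : ℝ) ≤ ∫ x, v x ^ 4 * φ x ^ 4 := integral_nonneg fun x => by positivity
  have hL : ∫⁻ x, ‖u x‖ₑ ^ (2 : ℝ)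
      = ENNReal.ofReal (∫ x, v x ^ 4 * φ x ^ 4) := by
    rw [ofReal_integral_eq_lintegral_ofReal hI4int
      (Filter.Eventually.of_forall fun x => by positivity)]
    apply lintegral_congr
    intro x
    rw [← ofReal_norm_eq_enorm,
      ENNReal.ofReal_rpow_of_nonneg (norm_nonneg (u x)) (by norm_num : (0:ℝ) ≤ 2)]
    congr 1
    rw [Real.norm_eq_abs, show (2 : ℝ) = ((2 : ℕ) : ℝ) by norm_num, Real.rpow_natCast,
      sq_abs]
    simp only [u]
    ring
  have hR : (∫⁻ x, ‖fderiv ℝ u x‖ₑ) = ENNReal.ofReal D := by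
    rw [hDdef, ofReal_integral_eq_lintegral_ofReal hDuint
      (Filter.Eventually.of_forall fun x => norm_nonneg _)]
    simp only [ofReal_norm_eq_enorm]
  have key : (∫ x, v x ^ 4 * φ x ^ 4) ≤ (C : ℝ) * D ^ (2 : ℝ) := by
    rw [hL, hR] at hGNS
    have hrhs : (C : ENNReal) * (ENNReal.ofReal D) ^ (2 : ℝ)
        = ENNReal.ofReal ((C : ℝ) * D ^ (2 : ℝ)) := by
      rw [ENNReal.ofReal_mul (by positivity : (0:ℝ) ≤ (C : ℝ)),
        ENNReal.ofReal_rpow_of_nonneg hDnn (by norm_num : (0:ℝ) ≤ 2),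
        ENNReal.ofReal_coe_nnreal]
    rw [hrhs] at hGNS
    exact (ENNReal.ofReal_le_ofReal_iff (by positivity)).1 hGNS
  have hhalf : (∫ x, v x ^ 4 * φ x ^ 4) ^ (1 / 2 : ℝ) ≤ Real.sqrt C * D := by
    calc (∫ x, v x ^ 4 * φ x ^ 4) ^ (1 / 2 : ℝ)
        ≤ ((C : ℝ) * D ^ (2 : ℝ)) ^ (1 / 2 : ℝ) :=
          Real.rpow_le_rpow hI4nn key (by norm_num)
      _ = Real.sqrt C * D := by
          rw [Real.mul_rpow C.coe_nonneg (Real.rpow_nonneg hDnn _),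
            ← Real.rpow_mul hDnn]
          norm_num [Real.sqrt_eq_rpow]
  -- put everything together
  have hbr : 0 ≤ A * Bv + (2 / r) * J := by positivity
  calc (∫ x, v x ^ 4 * φ x ^ 4) ^ (1 / 2 : ℝ)
      ≤ Real.sqrt C * D := hhalf
    _ ≤ Real.sqrt C * (2 * (A * Bv) + (4 / r) * J) := by
        apply mul_le_mul_of_nonneg_left _ (Real.sqrt_nonneg _)
        have := hHolder
        nlinarith [hJnn, hr]
    _ = 2 * Real.sqrt C * (A * Bv + (2 / r) * J) := by ring
    _ ≤ 2 * (Real.sqrt C + 1) * (A * Bv + (2 / r) * J) := by nlinarith [Real.sqrt_nonneg (C:ℝ)]
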